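/- For the first-touch attribution rule, the impression adjacency relation with post-attribution contribution bound enforcement with bound r maps any two adjacent datasets (differing by a single impression) to attributed datasets at ℓ1-distance at most 2r. -/

import Mathlib

/-! Framework for differentially private ad conversion measurement
(Delaney et al., "Differentially Private Ad Conversion Measurement"). -/

structure Impression where
  time : ℕ
  user : ℕ
  pub : ℕ
  adv : ℕ
  id : ℕ
deriving DecidableEq

structure Conversion where
  time : ℕ
  user : ℕ
  adv : ℕ
  id : ℕ
deriving DecidableEq

structure Dataset where
  imps : List Impression
  convs : List Conversion

/-- An attribution rule maps a time-ordered list of impressions and a conversion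
to a list of credits (one per impression). -/
abbrev AttrRule := List Impression → Conversion → List ℝ

/-- A valid attribution rule outputs one nonnegative weight per impression, summing to 1. -/
def ValidRule (a : AttrRule) : Prop :=
  ∀ is c, is ≠ [] →
    (a is c).length = is.length ∧ (a is c).sum = 1 ∧ ∀ w ∈ a is c, (0 : ℝ) ≤ w

/-- Impressions eligible for attribution of conversion `c`: those occurring earlier
with the same user and advertiser. -/
def eligible (D : Dataset) (c : Conversion) : List Impression :=
  D.imps.filter fun i => decide (i.time < c.time ∧ i.user = c.user ∧ i.adv = c.adv)

/-- ℓ₁ distance between attributed datasets. -/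
noncomputable def l1dist (w w' : (Impression × Conversion) →₀ ℝ) : ℝ :=
  (w - w').sum fun _ v => |v|

/-- Impressions and conversions are listed in time order. -/
def SortedDS (D : Dataset) : Prop :=
  D.imps.Pairwise (fun i j => i.time ≤ j.time) ∧
  D.convs.Pairwise (fun c c' => c.time ≤ c'.time)

/-- Inner loop of post-attribution contribution-bound enforcement: each weighted
(impression, conversion) pair is kept only if the remaining bound of its scope covers
the weight, in which case the weight is deducted. -/
noncomputable def applyPairs {σ : Type} [DecidableEq σ] (s : Impression → σ) (c : Conversion) :
    List (Impression × ℝ) → (σ → ℝ) × ((Impression × Conversion) →₀ ℝ) →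
      (σ → ℝ) × ((Impression × Conversion) →₀ ℝ)
  | [], st => st
  | (i, w) :: rest, st =>
      if w ≤ st.1 (s i) then
        applyPairs s c rest
          (Function.update st.1 (s i) (st.1 (s i) - w), st.2 + Finsupp.single (i, c) w)
      else
        applyPairs s c rest st

/-- Attribution with post-attribution contribution bound enforcement (Algorithm 1),
with contribution bounding scope map `s` and contribution bound `r`. -/
noncomputable def postAttr {σ : Type} [DecidableEq σ] (a : AttrRule) (s : Impression → σ)
    (r : ℝ) (D : Dataset) : (Impression × Conversion) →₀ ℝ :=
  (D.convs.foldl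
    (fun st c => applyPairs s c ((eligible D c).zip (a (eligible D c) c)) st)
    ((fun _ => r : σ → ℝ), (0 : (Impression × Conversion) →₀ ℝ))).2

/-- Attribution with pre-attribution contribution bound enforcement (Algorithm 2):
for each conversion, every scope with an eligible impression pays one unit of its bound
if available, otherwise its impressions are excluded from attribution. -/
noncomputable def preAttr {σ : Type} [DecidableEq σ] (a : AttrRule) (s : Impression → σ)
    (r : ℝ) (D : Dataset) : (Impression × Conversion) →₀ ℝ :=
  (D.convs.foldl
    (fun (st : (σ → ℝ) × ((Impression × Conversion) →₀ ℝ)) c =>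
      let el := eligible D c
      let surv := el.filter fun i => decide ((1 : ℝ) ≤ st.1 (s i))
      let scopes := (el.map s).dedup
      ((fun x => if x ∈ scopes ∧ (1 : ℝ) ≤ st.1 x then st.1 x - 1 else st.1 x : σ → ℝ),
        st.2 + ((surv.zip (a surv c)).map fun p => Finsupp.single (p.1, c) p.2).sum))
    ((fun _ => r : σ → ℝ), (0 : (Impression × Conversion) →₀ ℝ))).2

/-- Attribution without any contribution bound enforcement. -/
noncomputable def attrNoCap (a : AttrRule) (D : Dataset) :
    (Impression × Conversion) →₀ ℝ :=
  (D.convs.map fun c =>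
    (((eligible D c).zip (a (eligible D c) c)).map fun p => Finsupp.single (p.1, c) p.2).sum).sum

/-- Adjacency: `D'` results from `D` by adding a single impression (in time order). -/
def AddOneImpression (D D' : Dataset) : Prop :=
  ∃ (i0 : Impression) (l₁ l₂ : List Impression),
    D.imps = l₁ ++ l₂ ∧ D'.imps = l₁ ++ i0 :: l₂ ∧ D.convs = D'.convs

/-- Adjacency: `D` results from `D'` by removing all impressions whose scope (under `si`)
is `v` and all conversions whose scope (under `sc`) is `v`. -/
def RemovesScope {σ : Type} [DecidableEq σ] (si : Impression → σ)
    (sc : Conversion → Option σ) (v : σ) (D D' : Dataset) : Prop :=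
  D.imps = D'.imps.filter (fun i => decide (si i ≠ v)) ∧
  D.convs = D'.convs.filter (fun c => decide (sc c ≠ some v))

/-- First-touch attribution. -/
noncomputable def FTA : AttrRule := fun is _ =>
  match is with
  | [] => []
  | _ :: t => 1 :: t.map fun _ => 0

/-- Last-touch attribution. -/
noncomputable def LTA : AttrRule := fun is _ =>
  match is with
  | [] => []
  | _ :: _ => List.replicate (is.length - 1) 0 ++ [1]

/-- Uniform multi-touch attribution. -/
noncomputable def UNI : AttrRule := fun is _ => is.map fun _ => ((is.length : ℝ))⁻¹

/-- U-shaped attribution. -/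
noncomputable def USH : AttrRule := fun is _ =>
  match is with
  | [] => []
  | [_] => [1]
  | [_, _] => [0.5, 0.5]
  | _ :: _ :: _ :: _ =>
      (0.4 : ℝ) :: (List.replicate (is.length - 2) ((0.2 : ℝ) / ((is.length : ℝ) - 2)) ++ [0.4])

/-- Exponential time decay attribution with half-life `th`. -/
noncomputable def EXPR (th : ℝ) : AttrRule := fun is c =>
  let wt : Impression → ℝ := fun i => (2 : ℝ) ^ (-(((c.time : ℝ) - (i.time : ℝ)) / th))
  is.map fun i => wt i / (is.map wt).sum

namespace Thm52

noncomputable abbrev FF := (Impression × Conversion) →₀ ℝ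

/-- eligibility predicate -/
def pr (i : Impression) (c : Conversion) : Prop :=
  i.time < c.time ∧ i.user = c.user ∧ i.adv = c.adv

instance (i : Impression) (c : Conversion) : Decidable (pr i c) := by
  unfold pr; infer_instance

def hd (D : Dataset) (c : Conversion) : Option Impression := (eligible D c).head?

/-- one step of the simplified FTA post-attribution fold -/
noncomputable def step (h : Conversion → Option Impression)
    (st : (Impression → ℝ) × FF) (c : Conversion) : (Impression → ℝ) × FF :=
  match h c with
  | none => st
  | some i =>
      if 1 ≤ st.1 i then
        (Function.update st.1 i (st.1 i - 1), st.2 + Finsupp.single (i, c) 1)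
      else st

lemma applyPairs_zeros (s : Impression → Impression) (c : Conversion) :
    ∀ (t : List Impression) (st), applyPairs s c (t.zip (t.map fun _ => (0:ℝ))) st = st := by
  intro t
  induction t with
  | nil => intro st; rfl
  | cons a t ih =>
    intro st
    show applyPairs s c ((a, 0) :: t.zip (t.map fun _ => (0:ℝ))) st = st
    rw [applyPairs]
    split
    · rw [ih]; simp
    · exact ih st

lemma applyPairs_fta (el : List Impression) (c : Conversion) (st) :
    applyPairs (fun i => i) c (el.zip (FTA el c)) st
      = step (fun _ => el.head?) st c := by
  cases el with
  | nil => rfl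
  | cons a t =>
    show applyPairs (fun i => i) c ((a, 1) :: t.zip (t.map fun _ => (0:ℝ))) st = _
    rw [applyPairs]
    split
    · rw [applyPairs_zeros]; simp only [step, List.head?]; rw [if_pos (by assumption)]
    · rw [applyPairs_zeros]; simp only [step, List.head?]; rw [if_neg (by assumption)]

lemma postAttr_eq (r : ℝ) (D : Dataset) :
    postAttr FTA (fun i => i) r D
      = (D.convs.foldl (step (hd D)) ((fun _ => r), 0)).2 := by
  unfold postAttr
  have : (fun (st : (Impression → ℝ) × FF) c =>
      applyPairs (fun i => i) c ((eligible D c).zip (FTA (eligible D c) c)) st)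
      = step (hd D) := by
    funext st c
    rw [applyPairs_fta]
    unfold step hd
    rfl
  rw [this]


noncomputable def mass (w : FF) (k : Impression) : ℝ :=
  w.sum fun p v => if p.1 = k then v else 0

lemma mass_add_single (w : FF) (p0 : Impression × Conversion) (k) :
    mass (w + Finsupp.single p0 1) k = mass w k + if p0.1 = k then (1:ℝ) else 0 := by
  unfold mass
  rw [Finsupp.sum_add_index' (fun a => by simp) (fun a b₁ b₂ => by split <;> simp),
    Finsupp.sum_single_index (by simp)]

lemma mass_zero (k) : mass (0 : FF) k = 0 := by
  unfold mass; exact Finsupp.sum_zero_index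

/-- unfolding helper for `step` -/
lemma step_none {h st c} (hc : h c = none) : step h st c = st := by
  unfold step; rw [hc]

lemma step_some {h st c i} (hc : h c = some i) :
    step h st c = if 1 ≤ st.1 i then
      (Function.update st.1 i (st.1 i - 1), st.2 + Finsupp.single (i, c) 1) else st := by
  unfold step; rw [hc]

lemma fold_fst_nonneg (h) : ∀ (cs : List Conversion) (st : (Impression → ℝ) × FF),
    (∀ k, 0 ≤ st.1 k) → ∀ k, 0 ≤ (cs.foldl (step h) st).1 k := by
  intro cs
  induction cs with
  | nil => intro st hst k; exact hst k
  | cons c cs ih =>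
    intro st hst k
    rw [List.foldl_cons]
    refine ih _ (fun k' => ?_) k
    cases hc : h c with
    | none => rw [step_none hc]; exact hst k'
    | some i =>
      rw [step_some hc]
      split
      · rename_i hb
        simp only [Function.update_apply]
        split
        · linarith
        · exact hst k'
      · exact hst k'

lemma mass_fold (h) : ∀ (cs : List Conversion) (st : (Impression → ℝ) × FF) (k),
    mass (cs.foldl (step h) st).2 k + (cs.foldl (step h) st).1 k
      = mass st.2 k + st.1 k := by
  intro cs
  induction cs with
  | nil => intro st k; rfl
  | cons c cs ih =>
    intro st k
    rw [List.foldl_cons, ih]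
    cases hc : h c with
    | none => rw [step_none hc]
    | some i =>
      rw [step_some hc]
      split
      · rw [mass_add_single]
        dsimp only
        simp only [Function.update_apply]
        by_cases hik : i = k
        · subst hik
          rw [if_pos rfl, if_pos rfl]
          ring
        · rw [if_neg hik, if_neg (fun h => hik h.symm)]
          ring
      · rfl

lemma fold_snd_eq (h) : ∀ (cs : List Conversion) (st : (Impression → ℝ) × FF)
    (p : Impression × Conversion), (∀ c ∈ cs, h c ≠ some p.1) →
    (cs.foldl (step h) st).2 p = st.2 p := by
  intro cs
  induction cs with
  | nil => intro st p _; rfl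
  | cons c cs ih =>
    intro st p hp
    rw [List.foldl_cons, ih _ _ (fun c' hc' => hp c' (List.mem_cons_of_mem _ hc'))]
    cases hc : h c with
    | none => rw [step_none hc]
    | some i =>
      rw [step_some hc]
      split
      · have hip : i ≠ p.1 := fun he => hp c (List.mem_cons_self) (by rw [hc, he])
        simp only [Finsupp.add_apply]
        rw [Finsupp.single_apply_eq_zero.2 (fun hpe => absurd (congrArg Prod.fst hpe.symm) hip), add_zero]
      · rfl

lemma fold_snd_nonneg (h) : ∀ (cs : List Conversion) (st : (Impression → ℝ) × FF),
    (∀ p, 0 ≤ st.2 p) → ∀ p, 0 ≤ (cs.foldl (step h) st).2 p := by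
  intro cs
  induction cs with
  | nil => intro st hst p; exact hst p
  | cons c cs ih =>
    intro st hst p
    rw [List.foldl_cons]
    refine ih _ (fun p' => ?_) p
    cases hc : h c with
    | none => rw [step_none hc]; exact hst p'
    | some i =>
      rw [step_some hc]
      split
      · simp only [Finsupp.add_apply]
        have : (0:ℝ) ≤ Finsupp.single (i, c) (1:ℝ) p' := by
          rw [Finsupp.single_apply]; split <;> norm_num
        have := hst p'; linarith
      · exact hst p'

lemma fold_couple (h h' : Conversion → Option Impression) (T : Impression → Prop) :
    ∀ (cs : List Conversion) (st st' : (Impression → ℝ) × FF),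
    (∀ c ∈ cs, h c = h' c ∨ ((∀ k, h c = some k → T k) ∧ (∀ k, h' c = some k → T k))) →
    (∀ k, ¬ T k → st.1 k = st'.1 k) →
    (∀ p : Impression × Conversion, ¬ T p.1 → st.2 p = st'.2 p) →
    (∀ k, ¬ T k → (cs.foldl (step h) st).1 k = (cs.foldl (step h') st').1 k) ∧
    (∀ p : Impression × Conversion, ¬ T p.1 →
      (cs.foldl (step h) st).2 p = (cs.foldl (step h') st').2 p) := by
  intro cs
  induction cs with
  | nil => intro st st' _ h1 h2; exact ⟨h1, h2⟩
  | cons c cs ih =>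
    intro st st' hcs h1 h2
    rw [List.foldl_cons, List.foldl_cons]
    have hlocal : ∀ (g : Conversion → Option Impression) (stx : (Impression → ℝ) × FF),
        (∀ k, g c = some k → T k) →
        (∀ k, ¬ T k → (step g stx c).1 k = stx.1 k) ∧
        (∀ p : Impression × Conversion, ¬ T p.1 → (step g stx c).2 p = stx.2 p) := by
      intro g stx hg
      cases hc : g c with
      | none => rw [step_none hc]; exact ⟨fun _ _ => rfl, fun _ _ => rfl⟩
      | some i =>
        have hTi := hg i hc
        rw [step_some hc]
        split
        · constructor
          · intro k hk
            exact Function.update_of_ne (fun he : k = i => hk (by rw [he]; exact hTi)) _ _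
          · intro p hp
            simp only [Finsupp.add_apply]
            rw [Finsupp.single_apply_eq_zero.2
              (fun hpe => absurd hTi (by rw [hpe] at hp; exact hp)), add_zero]
        · exact ⟨fun _ _ => rfl, fun _ _ => rfl⟩
    have hrest : ∀ c' ∈ cs, h c' = h' c' ∨
        ((∀ k, h c' = some k → T k) ∧ (∀ k, h' c' = some k → T k)) :=
      fun c' hc' => hcs c' (List.mem_cons_of_mem _ hc')
    rcases hcs c (List.mem_cons_self) with heq | ⟨hT, hT'⟩
    · cases hc : h c with
      | none =>
        rw [step_none hc, step_none (heq ▸ hc)]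
        exact ih _ _ hrest h1 h2
      | some i =>
        by_cases hTi : T i
        · obtain ⟨e1, e2⟩ := hlocal h st (fun k hk => by
            rw [hc] at hk; exact (Option.some_inj.1 hk) ▸ hTi)
          obtain ⟨e1', e2'⟩ := hlocal h' st' (fun k hk => by
            rw [← heq, hc] at hk; exact (Option.some_inj.1 hk) ▸ hTi)
          refine ih _ _ hrest (fun k hk => ?_) (fun p hp => ?_)
          · rw [e1 k hk, e1' k hk]; exact h1 k hk
          · rw [e2 p hp, e2' p hp]; exact h2 p hp
        · -- synchronized step at i ∉ T
          have hc' : h' c = some i := heq ▸ hc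
          rw [step_some hc, step_some hc']
          have hbi : st.1 i = st'.1 i := h1 i hTi
          by_cases hb : 1 ≤ st.1 i
          · rw [if_pos hb, if_pos (hbi ▸ hb)]
            refine ih _ _ hrest (fun k hk => ?_) (fun p hp => ?_)
            · simp only [Function.update_apply]
              split
              · rw [hbi]
              · exact h1 k hk
            · simp only [Finsupp.add_apply]; rw [h2 p hp]
          · rw [if_neg hb, if_neg (hbi ▸ hb)]
            exact ih _ _ hrest h1 h2
    · obtain ⟨e1, e2⟩ := hlocal h st hT
      obtain ⟨e1', e2'⟩ := hlocal h' st' hT'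
      refine ih _ _ hrest (fun k hk => ?_) (fun p hp => ?_)
      · rw [e1 k hk, e1' k hk]; exact h1 k hk
      · rw [e2 p hp, e2' p hp]; exact h2 p hp


lemma mass_eq_sum (w : FF) (k) (S : Finset (Impression × Conversion)) (hS : w.support ⊆ S) :
    mass w k = ∑ p ∈ S, if p.1 = k then w p else 0 := by
  unfold mass Finsupp.sum
  refine Finset.sum_subset hS (fun p _ hnp => ?_)
  rw [Finsupp.notMem_support_iff.1 hnp]
  simp

lemma l1_le_two_slices (Φ Φ' : FF) (u v : Impression)
    (h0 : ∀ p : Impression × Conversion, p.1 ≠ u → p.1 ≠ v → Φ p = Φ' p)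
    (hΦ : ∀ p, 0 ≤ Φ p) (hΦ' : ∀ p, 0 ≤ Φ' p) :
    l1dist Φ Φ' ≤ mass Φ u + mass Φ' u + mass Φ v + mass Φ' v := by
  classical
  set S := Φ.support ∪ Φ'.support with hSdef
  have hsub : (Φ - Φ').support ⊆ S := Finsupp.support_sub
  have h1 : l1dist Φ Φ' = ∑ p ∈ S, |Φ p - Φ' p| := by
    unfold l1dist
    unfold Finsupp.sum
    rw [Finset.sum_subset hsub (fun p _ hnp => by
      rw [Finsupp.notMem_support_iff.1 hnp]; exact abs_zero)]
    exact Finset.sum_congr rfl (fun p _ => by rw [Finsupp.sub_apply])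
  rw [h1]
  have h2 : ∀ p ∈ S, |Φ p - Φ' p| ≤
      ((if p.1 = u then Φ p else 0) + (if p.1 = u then Φ' p else 0))
      + ((if p.1 = v then Φ p else 0) + (if p.1 = v then Φ' p else 0)) := by
    intro p _
    have habs : |Φ p - Φ' p| ≤ Φ p + Φ' p := by
      calc |Φ p - Φ' p| ≤ |Φ p| + |Φ' p| := abs_sub _ _
        _ = Φ p + Φ' p := by rw [abs_of_nonneg (hΦ p), abs_of_nonneg (hΦ' p)]
    by_cases hu : p.1 = u
    · rw [if_pos hu, if_pos hu]
      have : (0:ℝ) ≤ (if p.1 = v then Φ p else 0) + (if p.1 = v then Φ' p else 0) := by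
        have := hΦ p; have := hΦ' p
        split <;> linarith
      linarith
    · rw [if_neg hu, if_neg hu]
      by_cases hv : p.1 = v
      · rw [if_pos hv, if_pos hv]; linarith
      · rw [if_neg hv, if_neg hv, h0 p hu hv]
        simp
  calc ∑ p ∈ S, |Φ p - Φ' p|
      ≤ ∑ p ∈ S, (((if p.1 = u then Φ p else 0) + (if p.1 = u then Φ' p else 0))
        + ((if p.1 = v then Φ p else 0) + (if p.1 = v then Φ' p else 0))) :=
        Finset.sum_le_sum h2
    _ = mass Φ u + mass Φ' u + mass Φ v + mass Φ' v := by
        rw [Finset.sum_add_distrib, Finset.sum_add_distrib, Finset.sum_add_distrib,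
          ← mass_eq_sum Φ u S Finset.subset_union_left,
          ← mass_eq_sum Φ' u S Finset.subset_union_right,
          ← mass_eq_sum Φ v S Finset.subset_union_left,
          ← mass_eq_sum Φ' v S Finset.subset_union_right]
        ring


lemma l1_le_one_slice (Φ Φ' : FF) (u : Impression)
    (h0 : ∀ p : Impression × Conversion, p.1 ≠ u → Φ p = Φ' p)
    (hΦ : ∀ p, 0 ≤ Φ p) (hΦ' : ∀ p, 0 ≤ Φ' p) :
    l1dist Φ Φ' ≤ mass Φ u + mass Φ' u := by
  classical
  set S := Φ.support ∪ Φ'.support with hSdef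
  have hsub : (Φ - Φ').support ⊆ S := Finsupp.support_sub
  have h1 : l1dist Φ Φ' = ∑ p ∈ S, |Φ p - Φ' p| := by
    unfold l1dist
    unfold Finsupp.sum
    rw [Finset.sum_subset hsub (fun p _ hnp => by
      rw [Finsupp.notMem_support_iff.1 hnp]; exact abs_zero)]
    exact Finset.sum_congr rfl (fun p _ => by rw [Finsupp.sub_apply])
  rw [h1]
  have h2 : ∀ p ∈ S, |Φ p - Φ' p| ≤
      (if p.1 = u then Φ p else 0) + (if p.1 = u then Φ' p else 0) := by
    intro p _
    have habs : |Φ p - Φ' p| ≤ Φ p + Φ' p := by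
      calc |Φ p - Φ' p| ≤ |Φ p| + |Φ' p| := abs_sub _ _
        _ = Φ p + Φ' p := by rw [abs_of_nonneg (hΦ p), abs_of_nonneg (hΦ' p)]
    by_cases hu : p.1 = u
    · rw [if_pos hu, if_pos hu]; linarith
    · rw [if_neg hu, if_neg hu, h0 p hu]; simp
  calc ∑ p ∈ S, |Φ p - Φ' p|
      ≤ ∑ p ∈ S, ((if p.1 = u then Φ p else 0) + (if p.1 = u then Φ' p else 0)) :=
        Finset.sum_le_sum h2
    _ = mass Φ u + mass Φ' u := by
        rw [Finset.sum_add_distrib,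
          ← mass_eq_sum Φ u S Finset.subset_union_left,
          ← mass_eq_sum Φ' u S Finset.subset_union_right]

/-- eligible impressions among a list -/
def el (l : List Impression) (c : Conversion) : List Impression :=
  l.filter fun i => decide (pr i c)

lemma eligible_el (D : Dataset) (c : Conversion) : eligible D c = el D.imps c := rfl

lemma el_append (l l' : List Impression) (c) : el (l ++ l') c = el l c ++ el l' c :=
  List.filter_append _ _

lemma mem_el {l : List Impression} {c k} (h : k ∈ el l c) : k ∈ l ∧ pr k c := by
  have := List.mem_filter.1 h
  exact ⟨this.1, of_decide_eq_true this.2⟩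

lemma head?_some_mem {l : List Impression} {k} (h : l.head? = some k) : k ∈ l :=
  List.mem_of_mem_head? (by simp [h])

/-- first-match: on a time-sorted list, the head of the eligible sublist is the
first scope-matching element. -/
lemma head_filter_sorted (m : Impression → Bool) (t : ℕ) :
    ∀ (l : List Impression), l.Pairwise (fun a b => a.time ≤ b.time) → ∀ k,
    (l.filter (fun x => decide (x.time < t) && m x)).head? = some k →
    (l.filter m).head? = some k := by
  intro l hl
  induction l with
  | nil => simp
  | cons a l ih =>
    intro k hk
    rw [List.pairwise_cons] at hl
    by_cases hma : m a
    · by_cases hta : a.time < t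
      · rw [List.filter_cons_of_pos (by simp [hma, hta])] at hk
        rw [List.filter_cons_of_pos (by simp [hma])]
        simpa using hk
      · exfalso
        have hnil : (a :: l).filter (fun x => decide (x.time < t) && m x) = [] := by
          rw [List.filter_eq_nil_iff]
          intro x hx
          have hxt : ¬ x.time < t := by
            rcases List.mem_cons.1 hx with rfl | hxl
            · exact hta
            · have := hl.1 x hxl; omega
          simp [hxt]
        rw [hnil] at hk
        simp at hk
    · rw [List.filter_cons_of_neg (by simp [hma])] at hk
      rw [List.filter_cons_of_neg (by simp [hma])]
      exact ih hl.2 k hk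

/-- under a matching conversion, eligibility filter factors into time & scope parts -/
lemma el_factor (l : List Impression) (c : Conversion) (i0 : Impression)
    (hu : i0.user = c.user) (ha : i0.adv = c.adv) :
    el l c = l.filter (fun x => decide (x.time < c.time)
      && decide (x.user = i0.user ∧ x.adv = i0.adv)) := by
  refine List.filter_congr (fun x _ => ?_)
  simp only [pr, ← hu, ← ha]
  simp

end Thm52

/-- Theorem 5.2: for first-touch attribution, the impression adjacency relation with
post-attribution contribution bound enforcement (bound `r`, per-impression scope) yields
attributed datasets at ℓ₁-distance at most `2r`. -/
theorem post_attr_impression_fta_valid (r : ℕ) (hr : 0 < r) (D D' : Dataset)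
    (hD' : SortedDS D') (hadj : AddOneImpression D D') :
    l1dist (postAttr FTA (fun i => i) (r : ℝ) D)
      (postAttr FTA (fun i => i) (r : ℝ) D') ≤ 2 * (r : ℝ) := by
  classical
  obtain ⟨i0, l₁, l₂, hDi, hD'i, hcv⟩ := hadj
  rw [Thm52.postAttr_eq, Thm52.postAttr_eq, hcv]
  set cs := D'.convs with hcsdef
  set b0 : Impression → ℝ := fun _ => (r : ℝ) with hb0
  set Φ := (cs.foldl (Thm52.step (Thm52.hd D)) (b0, 0)).2 with hPhidef
  set Φ' := (cs.foldl (Thm52.step (Thm52.hd D')) (b0, 0)).2 with hPhi'def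
  -- sortedness facts
  have hsortall : (l₁ ++ i0 :: l₂).Pairwise (fun a b : Impression => a.time ≤ b.time) := by
    rw [← hD'i]; exact hD'.1
  have hs2 : (i0 :: l₂).Pairwise (fun a b : Impression => a.time ≤ b.time) :=
    (List.pairwise_append.1 hsortall).2.1
  have hl₂i0 : ∀ x ∈ l₂, i0.time ≤ x.time := (List.pairwise_cons.1 hs2).1
  have hl₂s : l₂.Pairwise (fun a b : Impression => a.time ≤ b.time) :=
    (List.pairwise_cons.1 hs2).2
  -- the key predicates
  set Pc : Conversion → Prop := fun c => Thm52.pr i0 c ∧ Thm52.el l₁ c = [] with hPcdef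
  set Qk : Impression → Prop := fun k => ∃ c, Pc c ∧ Thm52.hd D c = some k with hQkdef
  -- head computations
  have hdD : ∀ c, Thm52.hd D c = (Thm52.el l₁ c ++ Thm52.el l₂ c).head? := by
    intro c
    unfold Thm52.hd
    rw [Thm52.eligible_el, hDi, Thm52.el_append]
  have hdD'pos : ∀ c, Pc c → Thm52.hd D' c = some i0 := by
    intro c hP
    unfold Thm52.hd
    rw [Thm52.eligible_el, hD'i, Thm52.el_append, hP.2, List.nil_append]
    unfold Thm52.el
    rw [List.filter_cons_of_pos (by simpa using hP.1)]
    rfl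
  have hdD'neg : ∀ c, ¬ Pc c → Thm52.hd D' c = Thm52.hd D c := by
    intro c hnp
    rw [hdD]
    unfold Thm52.hd
    rw [Thm52.eligible_el, hD'i, Thm52.el_append]
    cases hel1 : Thm52.el l₁ c with
    | cons a t => rfl
    | nil =>
      have hnpr : ¬ Thm52.pr i0 c := fun hpr => hnp ⟨hpr, hel1⟩
      rw [List.nil_append, List.nil_append]
      unfold Thm52.el
      rw [List.filter_cons_of_neg (by simpa using hnpr)]
  -- membership helper from hd D
  have hd_mem : ∀ c k, Thm52.hd D c = some k → k ∈ l₁ ++ l₂ ∧ Thm52.pr k c := by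
    intro c k hhd
    rw [hdD c, ← Thm52.el_append] at hhd
    exact Thm52.mem_el (Thm52.head?_some_mem hhd)
  -- Q characterization via the scope-filtered list
  have hQmatch : ∀ k, Qk k →
      (l₂.filter (fun x => decide (x.user = i0.user ∧ x.adv = i0.adv))).head? = some k := by
    intro k hQ
    obtain ⟨c, hP, hhd⟩ := hQ
    rw [hdD c, hP.2, List.nil_append] at hhd
    rw [Thm52.el_factor l₂ c i0 hP.1.2.1 hP.1.2.2] at hhd
    exact Thm52.head_filter_sorted _ c.time l₂ hl₂s k hhd
  have hQprops : ∀ k, Qk k → k ∈ l₂ ∧ k.user = i0.user ∧ k.adv = i0.adv := by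
    intro k hQ
    have h1 := hQmatch k hQ
    have h2 := List.mem_filter.1 (Thm52.head?_some_mem h1)
    exact ⟨h2.1, of_decide_eq_true h2.2⟩
  have hQuniq : ∀ k k', Qk k → Qk k' → k = k' := by
    intro k k' h h'
    have h1 := hQmatch k h
    have h2 := hQmatch k' h'
    rw [h1] at h2
    exact Option.some_inj.1 h2
  -- F1: the moved-credit target is never a head in D' (filtering by ¬P suffices)
  have hF1 : ∀ k, Qk k → ∀ c, ¬ Pc c → Thm52.hd D c ≠ some k := by
    intro k hQ c hnp hhd
    obtain ⟨c0, hP0, hhd0⟩ := hQ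
    obtain ⟨hkl₂, hku, hka⟩ := hQprops k ⟨c0, hP0, hhd0⟩
    have hprk0 : Thm52.pr k c0 := (hd_mem c0 k hhd0).2
    have hkt : i0.time ≤ k.time := hl₂i0 k hkl₂
    have hprk : Thm52.pr k c := (hd_mem c k hhd).2
    have hpri0c : Thm52.pr i0 c :=
      ⟨lt_of_le_of_lt hkt hprk.1, (hku.symm.trans hprk.2.1), (hka.symm.trans hprk.2.2)⟩
    have hne : Thm52.el l₁ c ≠ [] := fun hn => hnp ⟨hpri0c, hn⟩
    rw [hdD c] at hhd
    cases hel : Thm52.el l₁ c with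
    | nil => exact hne hel
    | cons a t =>
      rw [hel] at hhd
      have hak : a = k := by simpa using hhd
      subst hak
      have hal₁ : a ∈ l₁ := (Thm52.mem_el (hel ▸ (List.mem_cons_self : a ∈ a :: t))).1
      have : a ∈ Thm52.el l₁ c0 :=
        List.mem_filter.2 ⟨hal₁, decide_eq_true hprk0⟩
      rw [hP0.2] at this
      exact absurd this List.not_mem_nil
  -- F3: if i0 is not a moved-credit target but some conversion satisfies P,
  -- then i0 is never a head in D
  have hF3 : (∃ c, Pc c) → ¬ Qk i0 → ∀ c, Thm52.hd D c ≠ some i0 := by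
    intro hex hnQ c hhd
    obtain ⟨c0, hP0⟩ := hex
    rw [hdD c] at hhd
    cases hel : Thm52.el l₁ c with
    | cons a t =>
      rw [hel] at hhd
      have hai : a = i0 := by simpa using hhd
      subst hai
      have hal₁ : a ∈ l₁ := (Thm52.mem_el (hel ▸ (List.mem_cons_self : a ∈ a :: t))).1
      have : a ∈ Thm52.el l₁ c0 := List.mem_filter.2 ⟨hal₁, decide_eq_true hP0.1⟩
      rw [hP0.2] at this
      exact absurd this List.not_mem_nil
    | nil =>
      rw [hel, List.nil_append] at hhd
      have hpr : Thm52.pr i0 c := (Thm52.mem_el (Thm52.head?_some_mem hhd)).2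
      exact hnQ ⟨c, ⟨hpr, hel⟩, by rw [hdD c, hel, List.nil_append]; exact hhd⟩
  -- generic facts about the two folds
  have hb0nn : ∀ k, (0:ℝ) ≤ b0 k := fun k => by positivity
  have hz2 : ∀ p : Impression × Conversion, ((b0, (0:Thm52.FF)).2) p = 0 := fun p => rfl
  have hPhinn : ∀ p, 0 ≤ Φ p :=
    Thm52.fold_snd_nonneg _ cs _ (fun p => le_of_eq (hz2 p).symm)
  have hPhi'nn : ∀ p, 0 ≤ Φ' p :=
    Thm52.fold_snd_nonneg _ cs _ (fun p => le_of_eq (hz2 p).symm)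
  have hmass_le : ∀ (h : Conversion → Option Impression) k,
      Thm52.mass (cs.foldl (Thm52.step h) (b0,0)).2 k ≤ (r:ℝ) := by
    intro h k
    have hm := Thm52.mass_fold h cs (b0, 0) k
    have hb := Thm52.fold_fst_nonneg h cs (b0,0) hb0nn k
    have : Thm52.mass ((b0, (0:Thm52.FF)).2) k = 0 := Thm52.mass_zero k
    rw [this] at hm
    have hb0k : (b0, (0:Thm52.FF)).1 k = (r:ℝ) := rfl
    rw [hb0k] at hm
    linarith
  have hmass0 : ∀ (h : Conversion → Option Impression) k, (∀ c ∈ cs, h c ≠ some k) →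
      Thm52.mass (cs.foldl (Thm52.step h) (b0,0)).2 k = 0 := by
    intro h k hk
    rw [Thm52.mass_eq_sum _ k _ (subset_refl _)]
    refine Finset.sum_eq_zero (fun p hp => ?_)
    by_cases h1 : p.1 = k
    · rw [if_pos h1]
      have := Thm52.fold_snd_eq h cs (b0,0) p (by rw [h1]; exact hk)
      rw [this]
      exact hz2 p
    · rw [if_neg h1]
  -- case analysis
  by_cases hE : ∃ c ∈ cs, Pc c
  · obtain ⟨c0, hc0m, hPc0⟩ := hE
    by_cases hQex : ∃ j, j ≠ i0 ∧ Qk j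
    · -- two affected slices: i0 and j
      obtain ⟨j, hji, hQj⟩ := hQex
      have hcpl := Thm52.fold_couple (Thm52.hd D) (Thm52.hd D') (fun k => k = i0 ∨ k = j)
        cs (b0,0) (b0,0) (fun c _ => by
          by_cases hP : Pc c
          · refine Or.inr ⟨fun k hk => Or.inr (hQuniq k j ⟨c, hP, hk⟩ hQj), fun k hk => ?_⟩
            rw [hdD'pos c hP] at hk
            exact Or.inl (Option.some_inj.1 hk).symm
          · exact Or.inl (hdD'neg c hP).symm)
        (fun _ _ => rfl) (fun _ _ => rfl)
      have hnQi0 : ¬ Qk i0 := fun hQi => hji (hQuniq j i0 hQj hQi)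
      have hmΦi0 : Thm52.mass Φ i0 = 0 :=
        hmass0 _ i0 (fun c _ => hF3 ⟨c0, hPc0⟩ hnQi0 c)
      have hmΦ'j : Thm52.mass Φ' j = 0 := by
        refine hmass0 _ j (fun c _ hhd => ?_)
        by_cases hP : Pc c
        · rw [hdD'pos c hP] at hhd
          exact hji.symm (Option.some_inj.1 hhd)
        · rw [hdD'neg c hP] at hhd
          exact hF1 j hQj c hP hhd
      have hbound := Thm52.l1_le_two_slices Φ Φ' i0 j
        (fun p hpu hpv => hcpl.2 p (by simp [hpu, hpv])) hPhinn hPhi'nn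
      have h1 := hmass_le (Thm52.hd D) j
      have h2 := hmass_le (Thm52.hd D') i0
      rw [hmΦi0, hmΦ'j] at hbound
      calc l1dist Φ Φ' ≤ 0 + Thm52.mass Φ' i0 + Thm52.mass Φ j + 0 := hbound
        _ ≤ 2 * (r:ℝ) := by rw [← hPhidef, ← hPhi'def] at *; linarith
    · -- only the i0 slice is affected
      have hcpl := Thm52.fold_couple (Thm52.hd D) (Thm52.hd D') (fun k => k = i0)
        cs (b0,0) (b0,0) (fun c _ => by
          by_cases hP : Pc c
          · refine Or.inr ⟨fun k hk => ?_, fun k hk => ?_⟩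
            · by_contra hki
              exact hQex ⟨k, hki, ⟨c, hP, hk⟩⟩
            · rw [hdD'pos c hP] at hk
              exact (Option.some_inj.1 hk).symm
          · exact Or.inl (hdD'neg c hP).symm)
        (fun _ _ => rfl) (fun _ _ => rfl)
      have hbound := Thm52.l1_le_one_slice Φ Φ' i0
        (fun p hpu => hcpl.2 p hpu) hPhinn hPhi'nn
      have h1 := hmass_le (Thm52.hd D) i0
      have h2 := hmass_le (Thm52.hd D') i0
      calc l1dist Φ Φ' ≤ Thm52.mass Φ i0 + Thm52.mass Φ' i0 := hbound
        _ ≤ 2 * (r:ℝ) := by rw [← hPhidef, ← hPhi'def] at *; linarith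
  · -- no conversion is affected: the outputs coincide
    have hcpl := Thm52.fold_couple (Thm52.hd D) (Thm52.hd D') (fun _ => False)
      cs (b0,0) (b0,0) (fun c hc => Or.inl (hdD'neg c (fun hP => hE ⟨c, hc, hP⟩)).symm)
      (fun _ _ => rfl) (fun _ _ => rfl)
    have heq : Φ = Φ' := Finsupp.ext (fun p => hcpl.2 p not_false)
    rw [heq]
    unfold l1dist
    rw [sub_self]
    rw [Finsupp.sum_zero_index]
    positivity
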